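/- Assume in addition β(0) = 1. Setting S := Σ_{k≥0, u≥0} β(k+u+1)²·Xᵏ·Yᵘ and B₀(X) := Σ_{l≥0} β(l)²·Xˡ in the ring of formal power series in two variables X, Y over ℝ, one has (1 − (q⁻¹λ² − 1)·q⁻¹·Y + (q⁻¹λ² − 1)·q⁻²·Y² − q⁻³·Y³)·X²·S = B₀(X)·(Y + X + q⁻¹·XY − q⁻²λ²·XY + q⁻³·X²Y²) − (X + Y + β(1)²·XY + q⁻¹·XY − q⁻²λ²·XY). -/

import Mathlib

def mk2 (f : ℕ → ℕ → ℝ) : MvPowerSeries (Fin 2) ℝ := fun m => f (m 0) (m 1)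

open MvPowerSeries Finsupp

lemma pair_apply0 (a b : ℕ) : (single 0 a + single 1 b : Fin 2 →₀ ℕ) 0 = a := by
  simp [Finsupp.add_apply, Finsupp.single_apply]

lemma pair_apply1 (a b : ℕ) : (single 0 a + single 1 b : Fin 2 →₀ ℕ) 1 = b := by
  simp [Finsupp.add_apply, Finsupp.single_apply]

lemma pair_le (a b : ℕ) (m : Fin 2 →₀ ℕ) :
    single (0 : Fin 2) a + single 1 b ≤ m ↔ a ≤ m 0 ∧ b ≤ m 1 := by
  rw [Finsupp.le_def]
  constructor
  · intro h
    exact ⟨by simpa [pair_apply0] using h 0, by simpa [pair_apply1] using h 1⟩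
  · rintro ⟨h0, h1⟩ s
    fin_cases s
    · simpa [pair_apply0] using h0
    · simpa [pair_apply1] using h1

lemma pair_eq (a b : ℕ) (m : Fin 2 →₀ ℕ) :
    m = single (0 : Fin 2) a + single 1 b ↔ m 0 = a ∧ m 1 = b := by
  constructor
  · rintro rfl; exact ⟨pair_apply0 a b, pair_apply1 a b⟩
  · rintro ⟨h0, h1⟩
    ext s
    fin_cases s
    · simpa [pair_apply0] using h0
    · simpa [pair_apply1] using h1

lemma hmono (a b : ℕ) :
    (X 0 : MvPowerSeries (Fin 2) ℝ) ^ a * X 1 ^ b =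
      monomial (single 0 a + single 1 b) 1 := by
  rw [X_pow_eq, X_pow_eq, monomial_mul_monomial, one_mul]

lemma coeff_T (a b : ℕ) (f : ℕ → ℕ → ℝ) (m : Fin 2 →₀ ℕ) :
    coeff m ((X 0 : MvPowerSeries (Fin 2) ℝ) ^ a * X 1 ^ b * mk2 f) =
      if a ≤ m 0 ∧ b ≤ m 1 then f (m 0 - a) (m 1 - b) else 0 := by
  rw [hmono, coeff_monomial_mul]
  simp only [pair_le]
  split_ifs with h
  · rw [one_mul, coeff_apply]
    show f ((m - (single 0 a + single 1 b) : Fin 2 →₀ ℕ) 0)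
        ((m - (single 0 a + single 1 b) : Fin 2 →₀ ℕ) 1) = _
    rw [Finsupp.tsub_apply, Finsupp.tsub_apply, pair_apply0, pair_apply1]
  · rfl

lemma coeff_M (a b : ℕ) (m : Fin 2 →₀ ℕ) :
    coeff m ((X 0 : MvPowerSeries (Fin 2) ℝ) ^ a * X 1 ^ b) =
      if m 0 = a ∧ m 1 = b then 1 else 0 := by
  classical
  rw [hmono, coeff_monomial]
  simp only [pair_eq]

lemma hcube (q lam : ℝ) (hq : q ≠ 0) (β : ℕ → ℝ)
    (hrec : ∀ k : ℕ, q * β (k + 2) - lam * β (k + 1) + β k = 0) (k : ℕ) :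
    β (k + 3) ^ 2 - (q⁻¹ * lam ^ 2 - 1) * q⁻¹ * β (k + 2) ^ 2 +
      (q⁻¹ * lam ^ 2 - 1) * q⁻¹ ^ 2 * β (k + 1) ^ 2 - q⁻¹ ^ 3 * β k ^ 2 = 0 := by
  have h1 := hrec k
  have h2 := hrec (k + 1)
  have key : q ^ 3 * β (k + 3) ^ 2 - q * (lam ^ 2 - q) * β (k + 2) ^ 2 +
      (lam ^ 2 - q) * β (k + 1) ^ 2 - β k ^ 2 = 0 := by
    linear_combination (q * (q * β (k + 3) + lam * β (k + 2) - β (k + 1))) * h2 -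
      (β k + lam * β (k + 1) - q * β (k + 2)) * h1
  field_simp
  linear_combination key

/-- assume moreover `β(0) = 1`. With `S = Σ_{k,u≥0} β(k+u+1)²XᵏYᵘ` and
`B₀(X) = Σ_{l≥0} β(l)²Xˡ`,
`(1 − (q⁻¹λ² − 1)q⁻¹Y + (q⁻¹λ² − 1)q⁻²Y² − q⁻³Y³)·X²·S
  = B₀(X)·(Y + X + q⁻¹XY − q⁻²λ²XY + q⁻³X²Y²) − (X + Y + β(1)²XY + q⁻¹XY − q⁻²λ²XY)`. -/
theorem stmt11 (q lam : ℝ) (hq : q ≠ 0) (β : ℕ → ℝ)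
    (hrec : ∀ k : ℕ, q * β (k + 2) - lam * β (k + 1) + β k = 0) (hβ0 : β 0 = 1) :
    (1 - MvPowerSeries.C (σ := Fin 2) (R := ℝ) ((q⁻¹ * lam ^ 2 - 1) * q⁻¹) * MvPowerSeries.X 1 +
        MvPowerSeries.C (σ := Fin 2) (R := ℝ) ((q⁻¹ * lam ^ 2 - 1) * q⁻¹ ^ 2) * MvPowerSeries.X 1 ^ 2 -
        MvPowerSeries.C (σ := Fin 2) (R := ℝ) (q⁻¹ ^ 3) * MvPowerSeries.X 1 ^ 3) *
      MvPowerSeries.X 0 ^ 2 * mk2 (fun k u => β (k + u + 1) ^ 2) =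
    mk2 (fun l b => if b = 0 then β l ^ 2 else 0) *
        (MvPowerSeries.X 1 + MvPowerSeries.X 0 +
          MvPowerSeries.C (σ := Fin 2) (R := ℝ) q⁻¹ * (MvPowerSeries.X 0 * MvPowerSeries.X 1) -
          MvPowerSeries.C (σ := Fin 2) (R := ℝ) (q⁻¹ ^ 2 * lam ^ 2) *
            (MvPowerSeries.X 0 * MvPowerSeries.X 1) +
          MvPowerSeries.C (σ := Fin 2) (R := ℝ) (q⁻¹ ^ 3) *
            (MvPowerSeries.X 0 ^ 2 * MvPowerSeries.X 1 ^ 2)) -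
      (MvPowerSeries.X 0 + MvPowerSeries.X 1 +
        MvPowerSeries.C (σ := Fin 2) (R := ℝ) (β 1 ^ 2) * (MvPowerSeries.X 0 * MvPowerSeries.X 1) +
        MvPowerSeries.C (σ := Fin 2) (R := ℝ) q⁻¹ * (MvPowerSeries.X 0 * MvPowerSeries.X 1) -
        MvPowerSeries.C (σ := Fin 2) (R := ℝ) (q⁻¹ ^ 2 * lam ^ 2) *
          (MvPowerSeries.X 0 * MvPowerSeries.X 1)) := by
  have main :
      (X 0 : MvPowerSeries (Fin 2) ℝ) ^ 2 * X 1 ^ 0 * mk2 (fun k u => β (k + u + 1) ^ 2) -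
        C (σ := Fin 2) (R := ℝ) ((q⁻¹ * lam ^ 2 - 1) * q⁻¹) *
          ((X 0 : MvPowerSeries (Fin 2) ℝ) ^ 2 * X 1 ^ 1 * mk2 (fun k u => β (k + u + 1) ^ 2)) +
        C (σ := Fin 2) (R := ℝ) ((q⁻¹ * lam ^ 2 - 1) * q⁻¹ ^ 2) *
          ((X 0 : MvPowerSeries (Fin 2) ℝ) ^ 2 * X 1 ^ 2 * mk2 (fun k u => β (k + u + 1) ^ 2)) -
        C (σ := Fin 2) (R := ℝ) (q⁻¹ ^ 3) *
          ((X 0 : MvPowerSeries (Fin 2) ℝ) ^ 2 * X 1 ^ 3 * mk2 (fun k u => β (k + u + 1) ^ 2)) =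
      (X 0 : MvPowerSeries (Fin 2) ℝ) ^ 0 * X 1 ^ 1 *
          mk2 (fun l b => if b = 0 then β l ^ 2 else 0) +
        (X 0 : MvPowerSeries (Fin 2) ℝ) ^ 1 * X 1 ^ 0 *
          mk2 (fun l b => if b = 0 then β l ^ 2 else 0) +
        C (σ := Fin 2) (R := ℝ) q⁻¹ *
          ((X 0 : MvPowerSeries (Fin 2) ℝ) ^ 1 * X 1 ^ 1 *
            mk2 (fun l b => if b = 0 then β l ^ 2 else 0)) -
        C (σ := Fin 2) (R := ℝ) (q⁻¹ ^ 2 * lam ^ 2) *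
          ((X 0 : MvPowerSeries (Fin 2) ℝ) ^ 1 * X 1 ^ 1 *
            mk2 (fun l b => if b = 0 then β l ^ 2 else 0)) +
        C (σ := Fin 2) (R := ℝ) (q⁻¹ ^ 3) *
          ((X 0 : MvPowerSeries (Fin 2) ℝ) ^ 2 * X 1 ^ 2 *
            mk2 (fun l b => if b = 0 then β l ^ 2 else 0)) -
        ((X 0 : MvPowerSeries (Fin 2) ℝ) ^ 1 * X 1 ^ 0 +
          (X 0 : MvPowerSeries (Fin 2) ℝ) ^ 0 * X 1 ^ 1 +
          C (σ := Fin 2) (R := ℝ) (β 1 ^ 2) * ((X 0 : MvPowerSeries (Fin 2) ℝ) ^ 1 * X 1 ^ 1) +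
          C (σ := Fin 2) (R := ℝ) q⁻¹ * ((X 0 : MvPowerSeries (Fin 2) ℝ) ^ 1 * X 1 ^ 1) -
          C (σ := Fin 2) (R := ℝ) (q⁻¹ ^ 2 * lam ^ 2) * ((X 0 : MvPowerSeries (Fin 2) ℝ) ^ 1 * X 1 ^ 1)) := by
    ext m
    simp only [map_sub, map_add, coeff_C_mul, coeff_T, coeff_M]
    generalize m 0 = i
    generalize m 1 = j
    rcases i with _ | _ | i <;> rcases j with _ | _ | _ | j <;>
      simp [Nat.add_sub_cancel, hβ0]
    · field_simp; ring
    · rw [show i + 2 + 1 = i + 3 by omega, show i + 1 + 1 = i + 2 by omega]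
      linear_combination hcube q lam hq β hrec i
    · rw [show i + (j + 1 + 1 + 1) + 1 = (i + j + 1) + 3 by omega,
        show i + (j + 1 + 1) + 1 = (i + j + 1) + 2 by omega,
        show i + (j + 1) + 1 = (i + j + 1) + 1 by omega]
      linear_combination hcube q lam hq β hrec (i + j + 1)
  linear_combination main
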